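/- (Lemma 7.) For every complex number q with |q| < 1 and all integers m₁ ≥ 1 and m₂ ≥ 1, ∑_{k₂=1}^{∞} ∑_{k₁=1}^{∞} q^{2k₁(m₁+m₂) + 2k₂ m₂ + (m₁+m₂)(m₁+m₂+1)} / ( ∏_{j=0}^{m₁} (1 + q^{2k₁+2j+1}) · ∏_{j=0}^{m₂} (1 + q^{2k₁+2k₂+2m₁+2j+1}) ) = q^{2(m₁+m₂)} · q^{2m₂} · q^{(m₁+m₂)(m₁+m₂+1)} / ( (1 - q^{2(m₁+m₂)}) · (1 - q^{2m₂}) · ∏_{j=1}^{m₁+m₂} (1 + q^{2j+1}) ). Here the numerator of the summand is q^{2k₁+2} q^{2k₁+4} ⋯ q^{2k₁+2m₁} · q^{2k₁+2k₂+2m₁+2} ⋯ q^{2k₁+2k₂+2m₁+2m₂}, and q^{(m₁+m₂)(m₁+m₂+1)} = q^2 q^4 ⋯ q^{2(m₁+m₂)}. -/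

import Mathlib

open Finset Filter

private lemma aux_norm_le (q : ℂ) (hq : ‖q‖ < 1) (e : ℕ) (he : 1 ≤ e) :
    ‖q ^ e‖ ≤ ‖q‖ := by
  rw [norm_pow]
  exact pow_le_of_le_one (norm_nonneg q) (by simpa using hq.le) (by omega)

private lemma aux_lb (q : ℂ) (hq : ‖q‖ < 1) (e : ℕ) (he : 1 ≤ e) :
    1 - ‖q‖ ≤ ‖1 + q ^ e‖ := by
  have h1 : ‖q ^ e‖ ≤ ‖q‖ := aux_norm_le q hq e he
  have h2 : ‖(1 : ℂ)‖ - ‖-(q ^ e)‖ ≤ ‖1 - -(q ^ e)‖ := norm_sub_norm_le _ _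
  simp only [norm_one, norm_neg, sub_neg_eq_add] at h2
  linarith

private lemma aux_ne (q : ℂ) (hq : ‖q‖ < 1) (e : ℕ) (he : 1 ≤ e) :
    1 + q ^ e ≠ 0 := by
  have := aux_lb q hq e he
  have hq' : ‖q‖ < 1 := by simpa using hq
  intro h
  rw [h, norm_zero] at this
  linarith

private lemma aux_prod_ne (q : ℂ) (hq : ‖q‖ < 1) (n : ℕ) (e : ℕ → ℕ)
    (he : ∀ j, 1 ≤ e j) :
    ∏ j ∈ Finset.range n, (1 + q ^ e j) ≠ 0 :=
  Finset.prod_ne_zero_iff.2 fun j _ => aux_ne q hq (e j) (he j)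

private lemma aux_prod_lb (q : ℂ) (hq : ‖q‖ < 1) (n : ℕ) (e : ℕ → ℕ)
    (he : ∀ j, 1 ≤ e j) :
    (1 - ‖q‖) ^ n ≤ ‖∏ j ∈ Finset.range n, (1 + q ^ e j)‖ := by
  have hq' : ‖q‖ < 1 := by simpa using hq
  rw [norm_prod]
  calc (1 - ‖q‖) ^ n = ∏ _j ∈ Finset.range n, (1 - ‖q‖) := by
        rw [Finset.prod_const, Finset.card_range]
    _ ≤ ∏ j ∈ Finset.range n, ‖1 + q ^ e j‖ :=
        Finset.prod_le_prod (fun _ _ => by linarith) (fun j _ => aux_lb q hq (e j) (he j))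

/-- The key one-variable telescoping sum. -/
private lemma key (q : ℂ) (hq : ‖q‖ < 1) (m c : ℕ) (hm : 1 ≤ m) :
    HasSum (fun k : ℕ => q ^ (2 * (k + 1) * m) /
        ∏ j ∈ Finset.range (m + 1), (1 + q ^ (2 * (k + 1 + c) + 2 * j + 1)))
      (q ^ (2 * m) /
        ((1 - q ^ (2 * m)) * ∏ j ∈ Finset.range m, (1 + q ^ (2 * (1 + c) + 2 * j + 1)))) := by
  have hq' : ‖q‖ < 1 := by simpa using hq
  have hq0 : (0:ℝ) ≤ ‖q‖ := norm_nonneg q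
  have h1q : (0:ℝ) < 1 - ‖q‖ := by linarith
  -- P k = product of m factors starting at exponent 2(k+c)+1
  set P : ℕ → ℂ := fun k => ∏ j ∈ Finset.range m, (1 + q ^ (2 * (k + c) + 2 * j + 1)) with hP
  set H : ℕ → ℂ := fun k => q ^ (2 * k * m) / P k with hHdef
  set f : ℕ → ℂ := fun k => q ^ (2 * (k + 1) * m) /
      ∏ j ∈ Finset.range (m + 1), (1 + q ^ (2 * (k + 1 + c) + 2 * j + 1)) with hf
  have hPne : ∀ k, P k ≠ 0 := fun k => aux_prod_ne q hq m _ (fun j => by omega)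
  have hPlb : ∀ k, (1 - ‖q‖) ^ m ≤ ‖P k‖ := fun k => aux_prod_lb q hq m _ (fun j => by omega)
  have hDne : ∀ k : ℕ, (∏ j ∈ Finset.range (m + 1), (1 + q ^ (2 * (k + 1 + c) + 2 * j + 1))) ≠ 0 :=
    fun k => aux_prod_ne q hq (m+1) _ (fun j => by omega)
  have hDlb : ∀ k : ℕ, (1 - ‖q‖) ^ (m+1) ≤
      ‖∏ j ∈ Finset.range (m + 1), (1 + q ^ (2 * (k + 1 + c) + 2 * j + 1))‖ :=
    fun k => aux_prod_lb q hq (m+1) _ (fun j => by omega)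
  have hrm : 1 - q ^ (2 * m) ≠ 0 := by
    intro h
    have : q ^ (2*m) = 1 := by linear_combination -h
    have : ‖q ^ (2*m)‖ = 1 := by rw [this, norm_one]
    have h2 := aux_norm_le q hq (2*m) (by omega)
    rw [this] at h2
    linarith
  -- telescoping identity
  have htel : ∀ k : ℕ, H (k+1) - H (k+2) = (1 - q ^ (2*m)) * f k := by
    intro k
    have hsne : (1 + q ^ (2 * (k + 1 + c) + 2 * m + 1)) ≠ 0 := aux_ne q hq _ (by omega)
    have htne : (1 + q ^ (2 * (k + 1 + c) + 1)) ≠ 0 := aux_ne q hq _ (by omega)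
    have hD1 : (∏ j ∈ Finset.range (m + 1), (1 + q ^ (2 * (k + 1 + c) + 2 * j + 1)))
        = P (k+1) * (1 + q ^ (2 * (k + 1 + c) + 2 * m + 1)) := by
      rw [Finset.prod_range_succ]
    have hD2 : (∏ j ∈ Finset.range (m + 1), (1 + q ^ (2 * (k + 1 + c) + 2 * j + 1)))
        = (1 + q ^ (2 * (k + 1 + c) + 1)) * P (k+2) := by
      rw [Finset.prod_range_succ', mul_comm]
      congr 1
      simp only [hP]
      refine Finset.prod_congr rfl fun j _ => ?_
      rw [show 2 * (k + 1 + c) + 2 * (j+1) + 1 = 2 * (k + 2 + c) + 2 * j + 1 by ring]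
    have e3 : q ^ (2 * (k+1) * m) / P (k+1)
        = q ^ (2 * (k+1) * m) * (1 + q ^ (2 * (k + 1 + c) + 2 * m + 1)) /
          (∏ j ∈ Finset.range (m + 1), (1 + q ^ (2 * (k + 1 + c) + 2 * j + 1))) := by
      rw [hD1, mul_div_mul_right _ _ hsne]
    have e4 : q ^ (2 * (k+2) * m) / P (k+2)
        = q ^ (2 * (k+2) * m) * (1 + q ^ (2 * (k + 1 + c) + 1)) /
          (∏ j ∈ Finset.range (m + 1), (1 + q ^ (2 * (k + 1 + c) + 2 * j + 1))) := by
      rw [hD2, mul_comm (1 + q ^ (2 * (k + 1 + c) + 1)) (P (k+2)),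
        mul_div_mul_right _ _ htne]
    show q ^ (2 * (k+1) * m) / P (k+1) - q ^ (2 * (k+2) * m) / P (k+2) = _
    simp only [hf]
    rw [e3, e4, div_sub_div_same, ← mul_div_assoc]
    congr 1
    ring
  -- summability of f
  have hbound : ∀ k : ℕ, ‖f k‖ ≤ (‖q‖ ^ 2) ^ k * (1 / (1 - ‖q‖) ^ (m+1)) := by
    intro k
    have hpos : (0:ℝ) < (1 - ‖q‖) ^ (m+1) := pow_pos h1q _
    simp only [hf, norm_div, norm_pow]
    calc ‖q‖ ^ (2 * (k+1) * m) / ‖∏ j ∈ Finset.range (m + 1), (1 + q ^ (2 * (k + 1 + c) + 2 * j + 1))‖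
        ≤ ‖q‖ ^ (2 * (k+1) * m) / (1 - ‖q‖) ^ (m+1) :=
          div_le_div_of_nonneg_left (pow_nonneg hq0 _) hpos (hDlb k)
      _ ≤ ‖q‖ ^ (2 * k) / (1 - ‖q‖) ^ (m+1) := by
          apply (div_le_div_iff_of_pos_right hpos).mpr
          exact pow_le_pow_of_le_one hq0 hq'.le
            (Nat.le_trans (by omega : 2*k ≤ 2*(k+1)) (Nat.le_mul_of_pos_right _ (by omega)))
      _ = (‖q‖ ^ 2) ^ k * (1 / (1 - ‖q‖) ^ (m+1)) := by
          rw [← pow_mul]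
          ring
  have hsum : Summable f := by
    apply Summable.of_norm
    apply Summable.of_nonneg_of_le (fun k => norm_nonneg _) hbound
    exact (summable_geometric_of_lt_one (by positivity) (by nlinarith)).mul_right _
  -- H tends to 0
  have hH0 : Tendsto (fun n => H (n+1)) atTop (nhds 0) := by
    apply squeeze_zero_norm (a := fun n => (‖q‖ ^ (2*m)) ^ (n+1) * (1 / (1 - ‖q‖) ^ m))
    · intro n
      have hpos : (0:ℝ) < (1 - ‖q‖) ^ m := pow_pos h1q _
      simp only [hHdef, norm_div, norm_pow]
      calc ‖q‖ ^ (2 * (n+1) * m) / ‖P (n+1)‖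
          ≤ ‖q‖ ^ (2 * (n+1) * m) / (1 - ‖q‖) ^ m :=
            div_le_div_of_nonneg_left (pow_nonneg hq0 _) hpos (hPlb (n+1))
        _ = (‖q‖ ^ (2*m)) ^ (n+1) * (1 / (1 - ‖q‖) ^ m) := by
            rw [← pow_mul]
            ring_nf
    · have h2m : ‖q‖ ^ (2*m) < 1 := by
        calc ‖q‖ ^ (2*m) ≤ ‖q‖ := by
              simpa [norm_pow] using aux_norm_le q hq (2*m) (by omega)
          _ < 1 := hq'
      have := (tendsto_pow_atTop_nhds_zero_of_lt_one (pow_nonneg hq0 _) h2m)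
      have := ((this.comp (tendsto_add_atTop_nat 1)).mul_const (1 / (1 - ‖q‖) ^ m))
      simpa using this
  -- conclude HasSum
  have hps : ∀ n : ℕ, ∑ i ∈ Finset.range n, f i = (H 1 - H (n+1)) / (1 - q ^ (2*m)) := by
    intro n
    have : ∑ i ∈ Finset.range n, f i
        = ∑ i ∈ Finset.range n, ((fun i => H (i+1)) i - (fun i => H (i+1)) (i+1)) / (1 - q ^ (2*m)) := by
      apply Finset.sum_congr rfl
      intro i _
      rw [show (fun i => H (i+1)) i - (fun i => H (i+1)) (i+1) = H (i+1) - H (i+2) from rfl, htel i]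
      field_simp
    rw [this, ← Finset.sum_div, Finset.sum_range_sub' (fun i => H (i+1)) n]
  have hlim : Tendsto (fun n => ∑ i ∈ Finset.range n, f i) atTop
      (nhds (H 1 / (1 - q ^ (2*m)))) := by
    simp only [hps]
    have : Tendsto (fun n => (H 1 - H (n+1)) / (1 - q ^ (2*m))) atTop
        (nhds ((H 1 - 0) / (1 - q ^ (2*m)))) := by
      exact Tendsto.div_const (Tendsto.const_sub _ hH0) _
    simpa using this
  have hhs : HasSum f (H 1 / (1 - q ^ (2*m))) := (hsum.hasSum_iff_tendsto_nat).2 hlim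
  have hval : H 1 / (1 - q ^ (2*m))
      = q ^ (2 * m) / ((1 - q ^ (2 * m)) * ∏ j ∈ Finset.range m, (1 + q ^ (2 * (1 + c) + 2 * j + 1))) := by
    show q ^ (2 * 1 * m) / P 1 / (1 - q ^ (2*m)) = _
    rw [div_div, show 2 * 1 * m = 2 * m by ring, mul_comm (P 1) (1 - q ^ (2*m))]
  rwa [hval] at hhs

/-- Lemma 7: for `m₁, m₂ ≥ 1`,
`∑_{k₂=1}^∞ ∑_{k₁=1}^∞ q^{2k₁(m₁+m₂)+2k₂m₂+(m₁+m₂)(m₁+m₂+1)}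
    / (∏_{j=0}^{m₁} (1+q^{2k₁+2j+1}) ∏_{j=0}^{m₂} (1+q^{2k₁+2k₂+2m₁+2j+1}))
  = q^{2(m₁+m₂)} q^{2m₂} q^{(m₁+m₂)(m₁+m₂+1)}
    / ((1-q^{2(m₁+m₂)}) (1-q^{2m₂}) ∏_{j=1}^{m₁+m₂} (1+q^{2j+1}))`.
The sums over `kᵢ ≥ 1` are written as sums over `kᵢ : ℕ` with `kᵢ` replaced by `kᵢ + 1`. -/
theorem lemma7 (q : ℂ) (hq : ‖q‖ < 1) (m₁ m₂ : ℕ) (hm₁ : 1 ≤ m₁) (hm₂ : 1 ≤ m₂) :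
    (∑' k₂ : ℕ, ∑' k₁ : ℕ,
        q ^ (2 * (k₁ + 1) * (m₁ + m₂) + 2 * (k₂ + 1) * m₂ + (m₁ + m₂) * (m₁ + m₂ + 1)) /
          ((∏ j ∈ Finset.range (m₁ + 1), (1 + q ^ (2 * (k₁ + 1) + 2 * j + 1))) *
            ∏ j ∈ Finset.range (m₂ + 1),
              (1 + q ^ (2 * (k₁ + 1) + 2 * (k₂ + 1) + 2 * m₁ + 2 * j + 1)))) =
      q ^ (2 * (m₁ + m₂)) * q ^ (2 * m₂) * q ^ ((m₁ + m₂) * (m₁ + m₂ + 1)) /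
        ((1 - q ^ (2 * (m₁ + m₂))) * (1 - q ^ (2 * m₂)) *
          ∏ j ∈ Finset.Icc 1 (m₁ + m₂), (1 + q ^ (2 * j + 1))) := by
  have hq' : ‖q‖ < 1 := by simpa using hq
  have hq0 : (0:ℝ) ≤ ‖q‖ := norm_nonneg q
  have h1q : (0:ℝ) < 1 - ‖q‖ := by linarith
  set F : ℕ → ℕ → ℂ := fun k₂ k₁ =>
    q ^ (2 * (k₁ + 1) * (m₁ + m₂) + 2 * (k₂ + 1) * m₂ + (m₁ + m₂) * (m₁ + m₂ + 1)) /
      ((∏ j ∈ Finset.range (m₁ + 1), (1 + q ^ (2 * (k₁ + 1) + 2 * j + 1))) *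
        ∏ j ∈ Finset.range (m₂ + 1),
          (1 + q ^ (2 * (k₁ + 1) + 2 * (k₂ + 1) + 2 * m₁ + 2 * j + 1))) with hF
  -- summability of the double series
  have hgeo : Summable (fun n : ℕ => (‖q‖^2)^n) :=
    summable_geometric_of_lt_one (by positivity) (by nlinarith)
  have hFb : ∀ p : ℕ × ℕ, ‖Function.uncurry F p‖ ≤
      ((‖q‖^2)^p.1 * (‖q‖^2)^p.2) * (1/(1-‖q‖)^(m₁+m₂+2)) := by
    rintro ⟨k₂, k₁⟩
    have hD1 : (1-‖q‖)^(m₁+1) ≤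
        ‖∏ j ∈ Finset.range (m₁+1), (1 + q^(2*(k₁+1)+2*j+1))‖ :=
      aux_prod_lb q hq (m₁+1) _ (fun j => by omega)
    have hD2 : (1-‖q‖)^(m₂+1) ≤
        ‖∏ j ∈ Finset.range (m₂+1), (1 + q^(2*(k₁+1)+2*(k₂+1)+2*m₁+2*j+1))‖ :=
      aux_prod_lb q hq (m₂+1) _ (fun j => by omega)
    have hE : 2*k₂+2*k₁ ≤ 2 * (k₁ + 1) * (m₁ + m₂) + 2 * (k₂ + 1) * m₂
        + (m₁ + m₂) * (m₁ + m₂ + 1) := by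
      have h1 : 2*k₁ ≤ 2*(k₁+1)*(m₁+m₂) :=
        le_trans (by omega) (Nat.le_mul_of_pos_right _ (by omega))
      have h2 : 2*k₂ ≤ 2*(k₂+1)*m₂ :=
        le_trans (by omega) (Nat.le_mul_of_pos_right _ (by omega))
      exact le_trans (Nat.add_le_add h2 h1)
        (le_trans (Nat.add_comm _ _).le (Nat.le_add_right _ _))
    simp only [Function.uncurry, hF, norm_div, norm_mul, norm_pow]
    calc ‖q‖ ^ (2 * (k₁ + 1) * (m₁ + m₂) + 2 * (k₂ + 1) * m₂ + (m₁ + m₂) * (m₁ + m₂ + 1)) /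
          (‖∏ j ∈ Finset.range (m₁+1), (1 + q^(2*(k₁+1)+2*j+1))‖ *
            ‖∏ j ∈ Finset.range (m₂+1), (1 + q^(2*(k₁+1)+2*(k₂+1)+2*m₁+2*j+1))‖)
        ≤ ‖q‖ ^ (2 * (k₁ + 1) * (m₁ + m₂) + 2 * (k₂ + 1) * m₂ + (m₁ + m₂) * (m₁ + m₂ + 1)) /
          ((1-‖q‖)^(m₁+1) * (1-‖q‖)^(m₂+1)) :=
          div_le_div_of_nonneg_left (pow_nonneg hq0 _) (by positivity)
            (mul_le_mul hD1 hD2 (by positivity) (norm_nonneg _))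
      _ ≤ ‖q‖ ^ (2*k₂+2*k₁) / ((1-‖q‖)^(m₁+1) * (1-‖q‖)^(m₂+1)) := by
          apply (div_le_div_iff_of_pos_right (by positivity)).mpr
          exact pow_le_pow_of_le_one hq0 hq'.le hE
      _ = ((‖q‖^2)^k₂ * (‖q‖^2)^k₁) * (1/(1-‖q‖)^(m₁+m₂+2)) := by
          rw [← pow_mul, ← pow_mul, ← pow_add, ← pow_add]
          rw [show m₁+1+(m₂+1) = m₁+m₂+2 by omega, show 2*k₂+2*k₁ = 2*k₂+2*k₁ from rfl]
          ring
  have hSF : Summable (Function.uncurry F) := by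
    apply Summable.of_norm
    apply Summable.of_nonneg_of_le (fun p => norm_nonneg _) hFb
    exact (hgeo.mul_of_nonneg hgeo (fun n => by positivity) (fun n => by positivity)).mul_right _
  simp only [hF] at hSF
  have hD1ne : ∀ k₁ : ℕ, (∏ j ∈ Finset.range (m₁+1), (1 + q^(2*(k₁+1)+2*j+1))) ≠ 0 :=
    fun k₁ => aux_prod_ne q hq (m₁+1) _ (fun j => by omega)
  -- inner sum over k₂ (for fixed k₁)
  have hinner : ∀ k₁ : ℕ, HasSum (fun k₂ => F k₂ k₁)
      ((q ^ (2*(k₁+1)*(m₁+m₂) + (m₁+m₂)*(m₁+m₂+1)) /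
          ∏ j ∈ Finset.range (m₁+1), (1 + q^(2*(k₁+1)+2*j+1))) *
        (q^(2*m₂) / ((1 - q^(2*m₂)) *
          ∏ j ∈ Finset.range m₂, (1 + q^(2*(1+(k₁+1+m₁))+2*j+1))))) := by
    intro k₁
    have h0 := (key q hq m₂ (k₁+1+m₁) hm₂).mul_left
      (q ^ (2*(k₁+1)*(m₁+m₂) + (m₁+m₂)*(m₁+m₂+1)) /
        ∏ j ∈ Finset.range (m₁+1), (1 + q^(2*(k₁+1)+2*j+1)))
    have heq : (fun k₂ : ℕ => (q ^ (2*(k₁+1)*(m₁+m₂) + (m₁+m₂)*(m₁+m₂+1)) /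
          ∏ j ∈ Finset.range (m₁+1), (1 + q^(2*(k₁+1)+2*j+1))) *
        (q ^ (2 * (k₂ + 1) * m₂) /
          ∏ j ∈ Finset.range (m₂ + 1), (1 + q ^ (2 * (k₂ + 1 + (k₁+1+m₁)) + 2 * j + 1))))
        = fun k₂ => F k₂ k₁ := by
      funext k₂
      simp only [hF]
      rw [div_mul_div_comm]
      congr 1
      · rw [← pow_add]
        congr 1
        ring
      · congr 1
        exact Finset.prod_congr rfl fun j _ => by
          rw [show 2*(k₂+1+(k₁+1+m₁))+2*j+1 = 2*(k₁+1)+2*(k₂+1)+2*m₁+2*j+1 by ring]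
    rwa [heq] at h0
  -- rewrite each inner-sum value as constant times the key summand for the outer sum
  have hAB : ∀ k₁ : ℕ, ((q ^ (2*(k₁+1)*(m₁+m₂) + (m₁+m₂)*(m₁+m₂+1)) /
          ∏ j ∈ Finset.range (m₁+1), (1 + q^(2*(k₁+1)+2*j+1))) *
        (q^(2*m₂) / ((1 - q^(2*m₂)) *
          ∏ j ∈ Finset.range m₂, (1 + q^(2*(1+(k₁+1+m₁))+2*j+1)))))
      = (q^(2*m₂) * q^((m₁+m₂)*(m₁+m₂+1)) / (1 - q^(2*m₂))) *
        (q ^ (2*(k₁+1)*(m₁+m₂)) /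
          ∏ j ∈ Finset.range (m₁+m₂+1), (1 + q^(2*(k₁+1)+2*j+1))) := by
    intro k₁
    have hmerge : (∏ j ∈ Finset.range (m₁+m₂+1), (1 + q^(2*(k₁+1)+2*j+1)))
        = (∏ j ∈ Finset.range (m₁+1), (1 + q^(2*(k₁+1)+2*j+1))) *
          ∏ j ∈ Finset.range m₂, (1 + q^(2*(1+(k₁+1+m₁))+2*j+1)) := by
      rw [show m₁+m₂+1 = (m₁+1)+m₂ by ring, Finset.prod_range_add]
      congr 1
      exact Finset.prod_congr rfl fun j _ => by
        rw [show 2*(k₁+1)+2*(m₁+1+j)+1 = 2*(1+(k₁+1+m₁))+2*j+1 by ring]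
    rw [div_mul_div_comm, div_mul_div_comm, hmerge]
    congr 1
    · rw [← pow_add, ← pow_add, ← pow_add]
      congr 1
      ring
    · ring
  -- outer sum over k₁
  have hkey2 := (key q hq (m₁+m₂) 0 (by omega)).mul_left
    (q^(2*m₂) * q^((m₁+m₂)*(m₁+m₂+1)) / (1 - q^(2*m₂)))
  simp only [Nat.add_zero] at hkey2
  -- the Icc product
  have hIcc : (∏ j ∈ Finset.Icc 1 (m₁+m₂), (1 + q^(2*j+1)))
      = ∏ j ∈ Finset.range (m₁+m₂), (1 + q^(2*1+2*j+1)) := by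
    rw [← Finset.Ico_add_one_right_eq_Icc, Finset.prod_Ico_eq_prod_range]
    exact Finset.prod_congr (by congr 1) fun j _ => by
      rw [show 2*(1+j)+1 = 2*1+2*j+1 by ring]
  calc (∑' k₂ : ℕ, ∑' k₁ : ℕ, F k₂ k₁)
      = ∑' k₁ : ℕ, ∑' k₂ : ℕ, F k₂ k₁ := by
        rw [Summable.tsum_comm (f := F)]
        exact hSF
    _ = ∑' k₁ : ℕ, ((q ^ (2*(k₁+1)*(m₁+m₂) + (m₁+m₂)*(m₁+m₂+1)) /
          ∏ j ∈ Finset.range (m₁+1), (1 + q^(2*(k₁+1)+2*j+1))) *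
        (q^(2*m₂) / ((1 - q^(2*m₂)) *
          ∏ j ∈ Finset.range m₂, (1 + q^(2*(1+(k₁+1+m₁))+2*j+1))))) :=
        tsum_congr fun k₁ => (hinner k₁).tsum_eq
    _ = ∑' k₁ : ℕ, ((q^(2*m₂) * q^((m₁+m₂)*(m₁+m₂+1)) / (1 - q^(2*m₂))) *
        (q ^ (2*(k₁+1)*(m₁+m₂)) /
          ∏ j ∈ Finset.range (m₁+m₂+1), (1 + q^(2*(k₁+1)+2*j+1)))) :=
        tsum_congr fun k₁ => hAB k₁
    _ = (q^(2*m₂) * q^((m₁+m₂)*(m₁+m₂+1)) / (1 - q^(2*m₂))) *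
        (q^(2*(m₁+m₂)) / ((1 - q^(2*(m₁+m₂))) *
          ∏ j ∈ Finset.range (m₁+m₂), (1 + q^(2*1+2*j+1)))) := hkey2.tsum_eq
    _ = q ^ (2 * (m₁ + m₂)) * q ^ (2 * m₂) * q ^ ((m₁ + m₂) * (m₁ + m₂ + 1)) /
        ((1 - q ^ (2 * (m₁ + m₂))) * (1 - q ^ (2 * m₂)) *
          ∏ j ∈ Finset.Icc 1 (m₁ + m₂), (1 + q ^ (2 * j + 1))) := by
        rw [hIcc, div_mul_div_comm]
        congr 1
        · ring
        · ring
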